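/- Let I ⊆ ℝ be an interval containing ω*, ω_r, and ω_{r+1}. Let f : ℝ → ℝ be twice differentiable on I with f′(ω*) = 0, with f″ Lipschitz continuous on I with constant γ, and |f″(ω_r)| ≥ ℓ₁ > 0. Let g : ℝ → ℝ be three times differentiable on I with |g‴(ω)| ≤ γ₁ for all ω ∈ I and |g″(ω_r)| ≥ ℓ₂ > 0. Suppose f′(ω_r) = g′(ω_r) and g′(ω_{r+1}) = 0. Then |ω* − ω_{r+1}| ≤ (|g″(ω_r) − f″(ω_r)|/(ℓ₁·ℓ₂))·|f′(ω_r)| + (γ₁/(2·ℓ₂))·|ω_{r+1} − ω_r|² + (γ/(2·ℓ₁))·|ω* − ω_r|². -/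

import Mathlib

/-- Quadratic Taylor remainder bound for a function with Lipschitz derivative. -/
lemma taylor_quad_bound {s : Set ℝ} (hs : Convex ℝ s) {h h' : ℝ → ℝ} {K : ℝ}
    (hd : ∀ x ∈ s, HasDerivAt h (h' x) x)
    (hK : ∀ x ∈ s, ∀ y ∈ s, |h' x - h' y| ≤ K * |x - y|)
    {a b : ℝ} (ha : a ∈ s) (hb : b ∈ s) :
    |h b - h a - h' a * (b - a)| ≤ K / 2 * |b - a| ^ 2 := by
  rcases eq_or_ne b a with hba | hba
  · simp [hba]
  have hK0 : 0 ≤ K := by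
    have h1 := (abs_nonneg (h' b - h' a)).trans (hK b hb a ha)
    have h2 : 0 < |b - a| := abs_pos.mpr (sub_ne_zero.mpr hba)
    nlinarith
  set d := b - a with hd_def
  have hmem : ∀ t ∈ Set.Icc (0:ℝ) 1, a + t * d ∈ s := by
    intro t ht
    have hconv := hs ha hb (by linarith [ht.2] : (0:ℝ) ≤ 1 - t) ht.1 (by ring)
    have h2 : (1 - t) * a + t * b = a + t * d := by rw [hd_def]; ring
    simpa [smul_eq_mul, h2] using hconv
  have hcont : ContinuousOn h' s := by
    apply LipschitzOnWith.continuousOn (K := Real.toNNReal K)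
    rw [lipschitzOnWith_iff_dist_le_mul]
    intro x hx y hy
    rw [Real.dist_eq, Real.dist_eq]
    calc |h' x - h' y| ≤ K * |x - y| := hK x hx y hy
      _ ≤ (Real.toNNReal K) * |x - y| := by
          apply mul_le_mul_of_nonneg_right (Real.le_coe_toNNReal K) (abs_nonneg _)
  have hφ : ∀ t ∈ Set.uIcc (0:ℝ) 1,
      HasDerivAt (fun t => h (a + t * d) - (h' a * d) * t)
        ((h' (a + t * d) - h' a) * d) t := by
    intro t ht
    rw [Set.uIcc_of_le (by norm_num : (0:ℝ) ≤ 1)] at ht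
    have h1 : HasDerivAt (fun t : ℝ => a + t * d) d t := by
      simpa using ((hasDerivAt_id t).mul_const d).const_add a
    have h2 := (hd _ (hmem t ht)).comp t h1
    have h3 := h2.sub ((hasDerivAt_id t).const_mul (h' a * d))
    exact h3.congr_deriv (by ring)
  have hcont2 : ContinuousOn (fun t : ℝ => (h' (a + t * d) - h' a) * d)
      (Set.Icc (0:ℝ) 1) := by
    apply ContinuousOn.mul _ continuousOn_const
    apply ContinuousOn.sub _ continuousOn_const
    exact hcont.comp (by fun_prop) hmem
  have hint : IntervalIntegrable (fun t : ℝ => (h' (a + t * d) - h' a) * d)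
      MeasureTheory.volume 0 1 := by
    apply ContinuousOn.intervalIntegrable
    rwa [Set.uIcc_of_le (by norm_num : (0:ℝ) ≤ 1)]
  have heq : ∫ t in (0:ℝ)..1, (h' (a + t * d) - h' a) * d
      = h b - h a - h' a * d := by
    rw [intervalIntegral.integral_eq_sub_of_hasDerivAt hφ hint]
    simp only [one_mul, mul_one, zero_mul, mul_zero, add_zero]
    rw [show a + d = b from by rw [hd_def]; ring]
    ring
  have hbound : ∀ t ∈ Set.Ioc (0:ℝ) 1,
      ‖(h' (a + t * d) - h' a) * d‖ ≤ (K * |d| ^ 2) * t := by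
    intro t ht
    rw [Real.norm_eq_abs, abs_mul]
    have h1 : |h' (a + t * d) - h' a| ≤ K * (t * |d|) := by
      have := hK _ (hmem t ⟨le_of_lt ht.1, ht.2⟩) a ha
      calc |h' (a + t * d) - h' a| ≤ K * |a + t * d - a| := this
        _ = K * (t * |d|) := by
            rw [show a + t * d - a = t * d by ring, abs_mul, abs_of_pos ht.1]
    calc |h' (a + t * d) - h' a| * |d| ≤ (K * (t * |d|)) * |d| :=
          mul_le_mul_of_nonneg_right h1 (abs_nonneg _)
      _ = (K * |d| ^ 2) * t := by ring
  have hval : ∫ t in (0:ℝ)..1, (K * |d| ^ 2) * t = K / 2 * |d| ^ 2 := by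
    rw [intervalIntegral.integral_const_mul, integral_id]
    ring
  have hnorm : ‖∫ t in (0:ℝ)..1, (h' (a + t * d) - h' a) * d‖
      ≤ |∫ t in (0:ℝ)..1, (K * |d| ^ 2) * t| := by
    apply intervalIntegral.norm_integral_le_abs_of_norm_le
    · rw [Set.uIoc_of_le (by norm_num : (0:ℝ) ≤ 1)]
      filter_upwards [MeasureTheory.ae_restrict_mem measurableSet_Ioc] with t ht
      exact hbound t ht
    · apply Continuous.intervalIntegrable
      fun_prop
  rw [hval, abs_of_nonneg (by positivity)] at hnorm
  rw [← heq]
  exact hnorm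

/-- Key error estimate (3.10). -/
theorem key_error_estimate
    (I : Set ℝ) (hI : Convex ℝ I)
    (ωs ωr ωr1 : ℝ) (hωs : ωs ∈ I) (hωr : ωr ∈ I) (hωr1 : ωr1 ∈ I)
    (f f' f'' g g' g'' g''' : ℝ → ℝ) (γ γ₁ ℓ₁ ℓ₂ : ℝ)
    (hf' : ∀ x ∈ I, HasDerivAt f (f' x) x)
    (hf'' : ∀ x ∈ I, HasDerivAt f' (f'' x) x)
    (hfs : f' ωs = 0)
    (hLipf : ∀ x ∈ I, ∀ y ∈ I, |f'' x - f'' y| ≤ γ * |x - y|)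
    (hl1 : 0 < ℓ₁) (hf''r : ℓ₁ ≤ |f'' ωr|)
    (hg' : ∀ x ∈ I, HasDerivAt g (g' x) x)
    (hg'' : ∀ x ∈ I, HasDerivAt g' (g'' x) x)
    (hg''' : ∀ x ∈ I, HasDerivAt g'' (g''' x) x)
    (hg3 : ∀ x ∈ I, |g''' x| ≤ γ₁)
    (hl2 : 0 < ℓ₂) (hg''r : ℓ₂ ≤ |g'' ωr|)
    (hinterp : f' ωr = g' ωr) (hopt : g' ωr1 = 0) :
    |ωs - ωr1| ≤ (|g'' ωr - f'' ωr| / (ℓ₁ * ℓ₂)) * |f' ωr|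
      + (γ₁ / (2 * ℓ₂)) * |ωr1 - ωr| ^ 2 + (γ / (2 * ℓ₁)) * |ωs - ωr| ^ 2 := by
  -- g'' is γ₁-Lipschitz on I
  have hLipg : ∀ x ∈ I, ∀ y ∈ I, |g'' x - g'' y| ≤ γ₁ * |x - y| := by
    intro x hx y hy
    have := hI.norm_image_sub_le_of_norm_hasDerivWithin_le
      (fun z hz => (hg''' z hz).hasDerivWithinAt)
      (fun z hz => by simpa using hg3 z hz) hy hx
    simpa [Real.norm_eq_abs] using this
  -- Taylor bounds
  have hRf := taylor_quad_bound hI hf'' hLipf hωr hωs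
  have hRg := taylor_quad_bound hI hg'' hLipg hωr hωr1
  rw [hfs] at hRf
  rw [hopt] at hRg
  set F2 := f'' ωr with hF2_def
  set G2 := g'' ωr with hG2_def
  set p := f' ωr with hp_def
  set Rf := 0 - p - F2 * (ωs - ωr) with hRf_def
  set Rg := 0 - g' ωr - G2 * (ωr1 - ωr) with hRg_def
  have hF2 : F2 ≠ 0 := fun h => by rw [h] at hf''r; simp at hf''r; linarith
  have hG2 : G2 ≠ 0 := fun h => by rw [h] at hg''r; simp at hg''r; linarith
  have key : ωs - ωr1 = p * (F2 - G2) / (F2 * G2) - Rf / F2 + Rg / G2 := by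
    field_simp
    rw [hRf_def, hRg_def, ← hinterp]
    ring
  have habs1 : |ωs - ωr1| ≤ |p * (F2 - G2) / (F2 * G2)| + |Rf / F2| + |Rg / G2| := by
    rw [key]
    calc |p * (F2 - G2) / (F2 * G2) - Rf / F2 + Rg / G2|
        ≤ |p * (F2 - G2) / (F2 * G2) - Rf / F2| + |Rg / G2| := abs_add_le _ _
      _ ≤ |p * (F2 - G2) / (F2 * G2)| + |Rf / F2| + |Rg / G2| := by
          have := abs_sub (p * (F2 - G2) / (F2 * G2)) (Rf / F2)
          linarith
  have hb1 : |p * (F2 - G2) / (F2 * G2)| ≤ (|G2 - F2| / (ℓ₁ * ℓ₂)) * |p| := by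
    calc |p * (F2 - G2) / (F2 * G2)| = |p| * |G2 - F2| / (|F2| * |G2|) := by
          rw [abs_div, abs_mul, abs_mul, abs_sub_comm F2 G2]
      _ ≤ |p| * |G2 - F2| / (ℓ₁ * ℓ₂) := by
          apply div_le_div_of_nonneg_left (by positivity) (by positivity)
          exact mul_le_mul hf''r hg''r hl2.le (abs_nonneg _)
      _ = (|G2 - F2| / (ℓ₁ * ℓ₂)) * |p| := by ring
  have hb2 : |Rf / F2| ≤ γ / (2 * ℓ₁) * |ωs - ωr| ^ 2 := by
    rw [abs_div]
    have hnum : |Rf| ≤ γ / 2 * |ωs - ωr| ^ 2 := by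
      have : Rf = 0 - f' ωr - f'' ωr * (ωs - ωr) := by rw [hRf_def]
      rw [this]
      exact hRf
    calc |Rf| / |F2| ≤ (γ / 2 * |ωs - ωr| ^ 2) / ℓ₁ := by
          exact div_le_div₀ ((abs_nonneg _).trans hnum) hnum hl1 hf''r
      _ = γ / (2 * ℓ₁) * |ωs - ωr| ^ 2 := by ring
  have hb3 : |Rg / G2| ≤ γ₁ / (2 * ℓ₂) * |ωr1 - ωr| ^ 2 := by
    rw [abs_div]
    have hnum : |Rg| ≤ γ₁ / 2 * |ωr1 - ωr| ^ 2 := by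
      have : Rg = 0 - g' ωr - g'' ωr * (ωr1 - ωr) := by rw [hRg_def]
      rw [this]
      exact hRg
    calc |Rg| / |G2| ≤ (γ₁ / 2 * |ωr1 - ωr| ^ 2) / ℓ₂ := by
          exact div_le_div₀ ((abs_nonneg _).trans hnum) hnum hl2 hg''r
      _ = γ₁ / (2 * ℓ₂) * |ωr1 - ωr| ^ 2 := by ring
  linarith
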